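/- A discrete topological space D admits a compatible metric with the unique midset property if and only if the cardinality |D| satisfies |D| ≠ 2, |D| ≠ 4, and |D| ≤ 𝔠, where 𝔠 is the cardinality of the continuum. -/

import Mathlib

open Cardinal

noncomputable def emb : ℕ → ℝ := fun k => if k = 0 then 0 else 1 + 1/k

lemma emb_pos_of_ne {k : ℕ} (h : k ≠ 0) : 1 ≤ emb k := by
  rw [emb, if_neg h]
  have : (0:ℝ) < 1/k := by positivity
  linarith

lemma emb_le_two (k : ℕ) : emb k ≤ 2 := by
  rw [emb]
  split
  · norm_num
  · rename_i h
    have hk : (1:ℝ) ≤ k := by exact_mod_cast Nat.one_le_iff_ne_zero.mpr h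
    have : 1/(k:ℝ) ≤ 1 := by
      rw [div_le_one (by linarith)]
      linarith
    linarith

lemma emb_inj : Function.Injective emb := by
  intro k l h
  rw [emb, emb] at h
  split at h <;> split at h
  · rename_i h1 h2; rw [h1, h2]
  · rename_i h1 h2
    exfalso
    have hk : (1:ℝ) ≤ l := by exact_mod_cast Nat.one_le_iff_ne_zero.mpr h2
    have : (0:ℝ) < 1/l := by positivity
    linarith
  · rename_i h1 h2
    exfalso
    have hk : (1:ℝ) ≤ k := by exact_mod_cast Nat.one_le_iff_ne_zero.mpr h1
    have : (0:ℝ) < 1/k := by positivity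
    linarith
  · rename_i h1 h2
    have : (1:ℝ)/k = 1/l := by linarith
    have hk : (0:ℝ) < k := by exact_mod_cast Nat.pos_of_ne_zero h1
    have hl : (0:ℝ) < l := by exact_mod_cast Nat.pos_of_ne_zero h2
    field_simp at this
    exact_mod_cast (by linarith : (k:ℝ) = l)

section Builder
variable {D : Type u} [t : TopologicalSpace D] [DiscreteTopology D]

theorem buildMetric (p : D → D → ℝ) (h0 : ∀ x, p x x = 0)
    (hsym : ∀ x y, p x y = p y x)
    (hlow : ∀ x y, x ≠ y → 1 ≤ p x y) (hhigh : ∀ x y, p x y ≤ 2)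
    (hump : ∀ y z : D, y ≠ z → ∃! x, p x y = p x z) :
    ∃ m : MetricSpace D, m.toUniformSpace.toTopologicalSpace = t ∧
      ∀ y z : D, y ≠ z → ∃! x, m.dist x y = m.dist x z := by
  have hnn : ∀ x y, 0 ≤ p x y := by
    intro x y
    by_cases h : x = y
    · simp [h, h0]
    · linarith [hlow x y h]
  have htri : ∀ x y z : D, p x z ≤ p x y + p y z := by
    intro x y z
    by_cases hxz : x = z
    · subst hxz; rw [h0]; have h1 := hnn x y; have h2 := hnn y x; linarith
    by_cases hxy : x = y
    · subst hxy; rw [h0]; linarith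
    by_cases hyz : y = z
    · subst hyz; rw [h0]; linarith
    · have := hlow x y hxy
      have := hlow y z hyz
      have := hhigh x z
      linarith
  have heq : ∀ x y : D, p x y = 0 → x = y := by
    intro x y h
    by_contra hne
    have := hlow x y hne
    linarith
  refine ⟨MetricSpace.ofDistTopology p h0 hsym htri ?_ heq, ?_, ?_⟩
  · intro s
    constructor
    · intro _ x hx
      refine ⟨1, one_pos, fun y hy => ?_⟩
      have : x = y := by
        by_contra hne
        have := hlow x y hne
        linarith
      rwa [← this]
    · intro _
      exact isOpen_discrete s
  · rfl
  · exact hump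


theorem natTableCase {X : Type v} (e : D ≃ X) (P : X → X → ℕ)
    (hdiag : ∀ x, P x x = 0) (hoff : ∀ x y, x ≠ y → P x y ≠ 0)
    (hsym : ∀ x y, P x y = P y x)
    (hump : ∀ y z : X, y ≠ z → ∃! x, P x y = P x z) :
    ∃ m : MetricSpace D, m.toUniformSpace.toTopologicalSpace = t ∧
      ∀ y z : D, y ≠ z → ∃! x, m.dist x y = m.dist x z := by
  apply buildMetric (fun a b => emb (P (e a) (e b)))
  · intro x; simp [hdiag, emb]
  · intro x y; simp [hsym (e x) (e y)]
  · intro x y h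
    exact emb_pos_of_ne (hoff _ _ (fun hc => h (e.injective hc)))
  · intro x y
    exact emb_le_two _
  · intro y z hyz
    obtain ⟨x₀, hx₀, hu₀⟩ := hump (e y) (e z) (fun hc => hyz (e.injective hc))
    refine ⟨e.symm x₀, ?_, ?_⟩
    · simp only [Equiv.apply_symm_apply]
      rw [hx₀]
    · intro x hx
      have := hu₀ (e x) (emb_inj hx)
      have : x = e.symm x₀ := by
        rw [← this]; simp
      exact this

end Builder

-- the 6-point table
def M6 : Fin 6 → Fin 6 → ℕ :=
  ![![0,1,1,2,2,1], ![1,0,1,1,3,3], ![1,1,0,4,1,4],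
    ![2,1,4,0,3,2], ![2,3,1,3,0,4], ![1,3,4,2,4,0]]

lemma M6_diag : ∀ x, M6 x x = 0 := by decide
lemma M6_off : ∀ x y, x ≠ y → M6 x y ≠ 0 := by decide
lemma M6_symm : ∀ x y, M6 x y = M6 y x := by decide
lemma M6_ump' : ∀ y z : Fin 6, y ≠ z →
    ∃ x, (M6 x y = M6 x z ∧ ∀ w, M6 w y = M6 w z → w = x) := by decide

lemma M6_ump : ∀ y z : Fin 6, y ≠ z → ∃! x, M6 x y = M6 x z := by
  intro y z h
  obtain ⟨x, h1, h2⟩ := M6_ump' y z h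
  exact ⟨x, h1, h2⟩


section Builder2
variable {D : Type u} [t : TopologicalSpace D] [DiscreteTopology D]

/-- the ± setoid on a group -/
def negSetoid (G : Type u) [AddCommGroup G] : Setoid G :=
  ⟨fun a b => a = b ∨ a = -b, by
    constructor
    · intro a; exact Or.inl rfl
    · rintro a b (rfl | rfl)
      · exact Or.inl rfl
      · exact Or.inr (by simp)
    · rintro a b c (rfl | rfl) h
      · exact h
      · rcases h with rfl | rfl
        · exact Or.inr rfl
        · exact Or.inl (by simp)⟩

theorem groupCase (G : Type u) [AddCommGroup G] (e : D ≃ G)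
    (hhalf : ∀ g : G, ∃! x : G, x + x = g) (hcard : #D ≤ continuum) :
    ∃ m : MetricSpace D, m.toUniformSpace.toTopologicalSpace = t ∧
      ∀ y z : D, y ≠ z → ∃! x, m.dist x y = m.dist x z := by
  classical
  have hQ : Nonempty (Quotient (negSetoid G) ↪ Set.Icc (1:ℝ) 2) := by
    rw [← Cardinal.lift_mk_le']
    have h1 : #(Quotient (negSetoid G)) ≤ continuum := by
      calc #(Quotient (negSetoid G)) ≤ #G := Cardinal.mk_quotient_le
        _ = #D := (Cardinal.mk_congr e).symm
        _ ≤ continuum := hcard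
    calc Cardinal.lift.{0} #(Quotient (negSetoid G))
        ≤ Cardinal.lift.{0} continuum := Cardinal.lift_le.mpr h1
      _ = continuum := Cardinal.lift_continuum
      _ = Cardinal.lift.{u} #(Set.Icc (1:ℝ) 2) := by
          rw [Cardinal.mk_Icc_real one_lt_two, Cardinal.lift_continuum]
  obtain ⟨j⟩ := hQ
  set q : G → Set.Icc (1:ℝ) 2 := fun g => j (Quotient.mk (negSetoid G) g) with hqdef
  have hq_eq : ∀ g h : G, q g = q h ↔ (g = h ∨ g = -h) := by
    intro g h
    constructor
    · intro hgh
      exact Quotient.exact (j.injective hgh)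
    · intro hgh
      exact congrArg j (Quotient.sound hgh)
  set p : D → D → ℝ := fun x y => if x = y then 0 else (q (e x - e y) : ℝ) with hpdef
  have hp1 : ∀ x y : D, x ≠ y → p x y = (q (e x - e y) : ℝ) := by
    intro x y h; simp [hpdef, h]
  apply buildMetric p
  · intro x; simp [hpdef]
  · intro x y
    by_cases h : x = y
    · simp [h]
    · rw [hp1 x y h, hp1 y x (Ne.symm h)]
      congr 1
      refine (hq_eq _ _).mpr (Or.inr ?_)
      abel
  · intro x y h
    rw [hp1 x y h]
    exact (q (e x - e y)).2.1
  · intro x y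
    by_cases h : x = y
    · simp [hpdef, h]
    · rw [hp1 x y h]; exact (q (e x - e y)).2.2
  · intro y z hyz
    have key : ∀ x : D, p x y = p x z ↔ e x + e x = e y + e z := by
      intro x
      constructor
      · intro hp
        by_cases hxy : x = y
        · exfalso
          subst hxy
          have hxz : x ≠ z := hyz
          rw [hp1 x z hxz] at hp
          have h0' : p x x = 0 := by simp [hpdef]
          rw [h0'] at hp
          have h1 := (q (e x - e z)).2.1
          rw [← hp] at h1; norm_num at h1
        by_cases hxz : x = z
        · exfalso
          subst hxz
          have hxy' : x ≠ y := hxy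
          rw [hp1 x y hxy'] at hp
          have h0' : p x x = 0 := by simp [hpdef]
          rw [h0'] at hp
          have h1 := (q (e x - e y)).2.1
          rw [hp] at h1; norm_num at h1
        · rw [hp1 x y hxy, hp1 x z hxz] at hp
          have hsub : q (e x - e y) = q (e x - e z) := Subtype.ext (by exact_mod_cast hp)
          rcases (hq_eq _ _).mp hsub with h | h
          · exfalso
            apply hyz
            apply e.injective
            exact sub_right_inj.mp h
          · calc e x + e x = (e x - e y) + (e y + e x) := by abel
              _ = (-(e x - e z)) + (e y + e x) := by rw [h]
              _ = (e y + e z) - (e x - e x) := by abel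
              _ = e y + e z := by abel
      · intro hx
        have hxy : x ≠ y := by
          rintro rfl
          exact hyz (e.injective (add_left_cancel hx))
        have hxz : x ≠ z := by
          rintro rfl
          apply hyz
          apply e.injective
          exact (add_right_cancel hx).symm
        rw [hp1 x y hxy, hp1 x z hxz]
        congr 1
        refine (hq_eq _ _).mpr (Or.inr ?_)
        calc e x - e y = (e x + e x) - (e y + e x) := by abel
          _ = (e y + e z) - (e y + e x) := by rw [hx]
          _ = -(e x - e z) := by abel
    obtain ⟨g, hg, hgu⟩ := hhalf (e y + e z)
    refine ⟨e.symm g, ?_, ?_⟩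
    · exact (key _).mpr (by simpa using hg)
    · intro x hx
      have := hgu (e x) ((key x).mp hx)
      rw [← this]; simp

end Builder2


lemma uliftHalf {G : Type*} [AddCommGroup G] (h : ∀ g : G, ∃! x : G, x + x = g) :
    ∀ g : ULift.{u} G, ∃! x : ULift.{u} G, x + x = g := by
  intro g
  obtain ⟨x, hx, hu⟩ := h g.down
  refine ⟨ULift.up x, ?_, ?_⟩
  · apply ULift.ext
    exact hx
  · intro y hy
    apply ULift.ext
    apply hu
    exact congrArg ULift.down hy

lemma zmodHalf (n k : ℕ) (hk : n = 2 * k + 1) :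
    ∀ g : ZMod n, ∃! x : ZMod n, x + x = g := by
  haveI : NeZero n := ⟨by omega⟩
  have hone : ((2 * k + 2 : ℕ) : ZMod n) = 1 := by
    have h1 : (2 * k + 2 : ℕ) = n + 1 := by omega
    rw [h1]
    push_cast
    rw [ZMod.natCast_self]
    ring
  intro g
  refine ⟨((k + 1 : ℕ) : ZMod n) * g, ?_, ?_⟩
  · show ((k + 1 : ℕ) : ZMod n) * g + ((k + 1 : ℕ) : ZMod n) * g = g
    have h2 : ((k + 1 : ℕ) : ZMod n) * g + ((k + 1 : ℕ) : ZMod n) * g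
        = ((2 * k + 2 : ℕ) : ZMod n) * g := by
      push_cast
      ring
    rw [h2, hone, one_mul]
  · intro x hx
    calc x = ((2 * k + 2 : ℕ) : ZMod n) * x := by rw [hone, one_mul]
      _ = ((k + 1 : ℕ) : ZMod n) * (x + x) := by push_cast; ring
      _ = ((k + 1 : ℕ) : ZMod n) * g := by rw [hx]

lemma finsuppHalf (D : Type*) : ∀ g : (D →₀ ZMod 3), ∃! x, x + x = g := by
  have h3 : ∀ v : D →₀ ZMod 3, v + v + v = 0 := by
    intro v
    ext a
    have : ∀ x : ZMod 3, x + x + x = 0 := by decide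
    simp [this (v a)]
  intro g
  refine ⟨-g, ?_, ?_⟩
  · have h := h3 g
    have : -g + -g - g = -(g + g + g) := by abel
    rw [h, neg_zero] at this
    exact sub_eq_zero.mp this
  · intro x hx
    have h1 : (x + g) + (x + g) = g + g + g := by rw [← hx]; abel
    rw [h3 g] at h1
    have h2 := h3 (x + g)
    have h4 : x + g = 0 := by
      have e1 : x + g = ((x + g) + (x + g) + (x + g)) - ((x + g) + (x + g)) := by abel
      rw [h2, h1] at e1
      simpa using e1
    exact eq_neg_of_add_eq_zero_left h4


namespace Hub

variable (t : ℕ)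

abbrev C := ZMod t × ZMod 2

def partner (a : C t) : C t := (a.1, a.2 + 1)

def code (a : C t) : ℕ := Nat.pair a.1.val a.2.val

def ecode (a b : C t) : ℕ := Nat.pair (min (code t a) (code t b)) (max (code t a) (code t b))

def tau (z : C t) : C t := if z = (1, 1) then (-1, 0) else (z.1 - 1, z.2)

def sig (a : C t) : C t := if a = (-1, 0) then (1, 1) else (a.1 + 1, a.2)

def P : (Bool ⊕ C t) → (Bool ⊕ C t) → ℕ
  | .inl a, .inl b => if a = b then 0 else 2
  | .inl true, .inr _ => 1
  | .inr _, .inl true => 1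
  | .inl false, .inr z => if z = (0, 0) then 1 else 3 + ecode t z (tau t z)
  | .inr z, .inl false => if z = (0, 0) then 1 else 3 + ecode t z (tau t z)
  | .inr a, .inr b => if a = b then 0 else if b = partner t a then 1 else 3 + ecode t a b

variable {t}

lemma z2_cases : ∀ s s' : ZMod 2, s ≠ s' + 1 ∨ s = s' + 1 := by decide

section Facts
variable (ht : 3 ≤ t)
include ht

lemma two_ne_zero' : (2 : ZMod t) ≠ 0 := by
  haveI : NeZero t := ⟨by omega⟩
  intro h
  have : ((2 : ℕ) : ZMod t) = 0 := by exact_mod_cast h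
  rw [ZMod.natCast_eq_zero_iff] at this
  have := Nat.le_of_dvd (by norm_num) this
  omega

lemma one_ne_zero' : (1 : ZMod t) ≠ 0 := by
  haveI : NeZero t := ⟨by omega⟩
  haveI : Fact (1 < t) := ⟨by omega⟩
  exact one_ne_zero

lemma code_inj : Function.Injective (code t) := by
  haveI : NeZero t := ⟨by omega⟩
  intro a b h
  rw [code, code] at h
  obtain ⟨h1, h2⟩ := Nat.pair_eq_pair.mp h
  exact Prod.ext (ZMod.val_injective _ h1) (ZMod.val_injective _ h2)

lemma ecode_eq_iff {a b c d : C t} :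
    ecode t a b = ecode t c d ↔ ((a = c ∧ b = d) ∨ (a = d ∧ b = c)) := by
  constructor
  · intro h
    rw [ecode, ecode] at h
    obtain ⟨h1, h2⟩ := Nat.pair_eq_pair.mp h
    have : (code t a = code t c ∧ code t b = code t d) ∨
        (code t a = code t d ∧ code t b = code t c) := by omega
    rcases this with ⟨hh1, hh2⟩ | ⟨hh1, hh2⟩
    · exact Or.inl ⟨code_inj ht hh1, code_inj ht hh2⟩
    · exact Or.inr ⟨code_inj ht hh1, code_inj ht hh2⟩
  · rintro (⟨rfl, rfl⟩ | ⟨rfl, rfl⟩)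
    · rfl
    · rw [ecode, ecode, min_comm, max_comm]

end Facts

lemma partner_ne (a : C t) : partner t a ≠ a := by
  rw [partner]
  intro h
  rw [Prod.ext_iff] at h
  have : ∀ s : ZMod 2, s + 1 ≠ s := by decide
  exact this a.2 h.2

lemma partner_partner (a : C t) : partner t (partner t a) = a := by
  rw [partner, partner]
  have : ∀ s : ZMod 2, s + 1 + 1 = s := by decide
  exact Prod.ext rfl (this a.2)

lemma partner_eq_iff {a b : C t} : b = partner t a ↔ a = partner t b := by
  constructor
  · intro h; rw [h, partner_partner]
  · intro h; rw [h, partner_partner]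

section TauFacts
variable (ht : 3 ≤ t)
include ht

lemma tau_ne_self (z : C t) : tau t z ≠ z := by
  rw [tau]
  split
  · rename_i h
    rw [h]
    intro hc
    rw [Prod.ext_iff] at hc
    exact absurd (show (0:ZMod 2) = 1 from hc.2) (by decide)
  · intro hc
    rw [Prod.ext_iff] at hc
    exact one_ne_zero' ht (by linear_combination -hc.1)

lemma tau_ne_partner (z : C t) : tau t z ≠ partner t z := by
  rw [tau, partner]
  split
  · rename_i h
    rw [h]
    intro hc
    rw [Prod.ext_iff] at hc
    exact two_ne_zero' ht (by linear_combination -hc.1)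
  · intro hc
    rw [Prod.ext_iff] at hc
    have : ∀ s : ZMod 2, s ≠ s + 1 := by decide
    exact this z.2 hc.2

lemma tau_ne_01 (z : C t) (hz : z ≠ (0, 0)) : tau t z ≠ (0, 1) := by
  rw [tau]
  split
  · intro hc
    rw [Prod.ext_iff] at hc
    exact absurd (show (0:ZMod 2) = 1 from hc.2) (by decide)
  · rename_i hne
    intro hc
    rw [Prod.ext_iff] at hc
    apply hne
    have h1 : z.1 = 1 := by linear_combination hc.1
    exact Prod.ext h1 hc.2

lemma tau_inj {z z' : C t} (hz : z ≠ (0, 0)) (hz' : z' ≠ (0, 0))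
    (h : tau t z = tau t z') : z = z' := by
  rw [tau, tau] at h
  split at h <;> split at h
  · rename_i h1 h2; rw [h1, h2]
  · rename_i h1 h2
    exfalso
    rw [Prod.ext_iff] at h
    apply hz'
    exact Prod.ext (by linear_combination -h.1) h.2.symm
  · rename_i h1 h2
    exfalso
    rw [Prod.ext_iff] at h
    apply hz
    exact Prod.ext (by linear_combination h.1) h.2
  · rw [Prod.ext_iff] at h
    exact Prod.ext (by linear_combination h.1) h.2

lemma tau_sig (a : C t) (ha : a ≠ (0, 1)) : tau t (sig t a) = a := by
  rw [sig]
  split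
  · rename_i h
    rw [tau, if_pos rfl, h]
  · rename_i h
    rw [tau, if_neg ?_]
    · exact Prod.ext (by ring) rfl
    · intro hc
      apply ha
      rw [Prod.ext_iff] at hc
      exact Prod.ext (by linear_combination hc.1) hc.2

lemma sig_ne_00 (a : C t) (ha : a ≠ (0, 1)) : sig t a ≠ (0, 0) := by
  rw [sig]
  split
  · intro hc
    rw [Prod.ext_iff] at hc
    exact absurd (show (1:ZMod 2) = 0 from hc.2) (by decide)
  · rename_i h
    intro hc
    apply h
    rw [Prod.ext_iff] at hc
    exact Prod.ext (by linear_combination hc.1) hc.2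

lemma tau_no2cycle {z z' : C t} (hz : z ≠ (0, 0)) (hz' : z' ≠ (0, 0)) (hne : z ≠ z')
    (h1 : tau t z = z') (h2 : tau t z' = z) : False := by
  rw [tau] at h1 h2
  split at h1 <;> split at h2
  · rename_i e1 e2; exact hne (e1.trans e2.symm)
  · rename_i e1 e2
    rw [Prod.ext_iff] at h1 h2
    rw [e1] at h2
    have hb1 : z'.2 = 0 := h1.2.symm
    have hb2 : z'.2 = (1 : ZMod 2) := h2.2
    rw [hb1] at hb2
    exact absurd hb2 (by decide)
  · rename_i e1 e2
    rw [Prod.ext_iff] at h1 h2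
    rw [e2] at h1
    have hb1 : z.2 = 0 := h2.2.symm
    have hb2 : z.2 = (1 : ZMod 2) := h1.2
    rw [hb1] at hb2
    exact absurd hb2 (by decide)
  · rw [Prod.ext_iff] at h1 h2
    have a1 := h1.1
    have a2 := h2.1
    rw [← a1] at a2
    exact two_ne_zero' ht (by linear_combination -a2)

end TauFacts

end Hub

namespace Hub2
open Hub

variable {t : ℕ}

-- P value lemmas
lemma P_tt : P t (.inl true) (.inl true) = 0 := rfl
lemma P_ff : P t (.inl false) (.inl false) = 0 := rfl
lemma P_tf : P t (.inl true) (.inl false) = 2 := rfl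
lemma P_ft : P t (.inl false) (.inl true) = 2 := rfl
lemma P_h_inr (a : C t) : P t (.inl true) (.inr a) = 1 := rfl
lemma P_inr_h (a : C t) : P t (.inr a) (.inl true) = 1 := rfl
lemma P_q_inr (z : C t) :
    P t (.inl false) (.inr z) = if z = (0, 0) then 1 else 3 + ecode t z (tau t z) := rfl
lemma P_inr_q (z : C t) :
    P t (.inr z) (.inl false) = if z = (0, 0) then 1 else 3 + ecode t z (tau t z) := rfl
lemma P_inr_inr (a b : C t) :
    P t (.inr a) (.inr b) = if a = b then 0 else if b = partner t a then 1
      else 3 + ecode t a b := rfl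

lemma i01_eq_partner : ((0, 1) : C t) = partner t (0, 0) := rfl

lemma i00_ne_i01 : ((0, 0) : C t) ≠ (0, 1) := by
  intro h
  rw [Prod.ext_iff] at h
  exact absurd (show (0 : ZMod 2) = 1 from h.2) (by decide)

section Main
variable (ht : 3 ≤ t)
include ht

omit ht in
lemma case_hq : ∃! x, P t x (.inl true) = P t x (.inl false) := by
  refine ⟨.inr (0, 0), ?_, ?_⟩
  · show P t _ _ = P t _ _
    rw [P_inr_h, P_inr_q, if_pos rfl]
  · rintro (b | w) hx
    · cases b
      · rw [P_ft, P_ff] at hx; omega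
      · rw [P_tt, P_tf] at hx; omega
    · rw [P_inr_h, P_inr_q] at hx
      split at hx
      · rename_i h; rw [h]
      · omega

omit ht in
lemma case_h_inr (a : C t) : ∃! x, P t x (.inl true) = P t x (.inr a) := by
  refine ⟨.inr (partner t a), ?_, ?_⟩
  · show P t _ _ = P t _ _
    rw [P_inr_h, P_inr_inr, if_neg (partner_ne a), if_pos (partner_partner a).symm]
  · rintro (b | w) hx
    · cases b
      · rw [P_ft, P_q_inr] at hx
        split at hx <;> omega
      · rw [P_tt, P_h_inr] at hx; omega
    · rw [P_inr_h, P_inr_inr] at hx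
      split at hx
      · omega
      · split at hx
        · rename_i hcb
          rw [partner_eq_iff.mp hcb]
        · omega

lemma case_q_inr (a : C t) : ∃! x, P t x (.inl false) = P t x (.inr a) := by
  by_cases ha : a = (0, 1)
  · subst ha
    refine ⟨.inr (0, 0), ?_, ?_⟩
    · show P t _ _ = P t _ _
      rw [P_inr_q, if_pos rfl, P_inr_inr, if_neg i00_ne_i01, if_pos i01_eq_partner]
    · rintro (b | w) hx
      · cases b
        · rw [P_ff, P_q_inr, if_neg (Ne.symm i00_ne_i01)] at hx
          omega
        · rw [P_tf, P_h_inr] at hx; omega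
      · rw [P_inr_q, P_inr_inr] at hx
        split at hx
        · rename_i h; rw [h]
        · rename_i hw
          exfalso
          split at hx
          · omega
          · split at hx
            · rename_i hp
              exact hw (by rw [partner_eq_iff.mp hp]; rfl)
            · have := (ecode_eq_iff ht).mp (by omega : ecode t w (tau t w) = ecode t w (0,1))
              rcases this with ⟨-, h2⟩ | ⟨h1, h2⟩
              · exact tau_ne_01 ht w hw h2
              · exact tau_ne_self ht w (h1 ▸ h2)
  · refine ⟨.inr (sig t a), ?_, ?_⟩
    · show P t _ _ = P t _ _
      have hs1 : sig t a ≠ a := by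
        intro hc
        have h1 := tau_sig ht a ha
        rw [hc] at h1
        exact tau_ne_self ht a h1
      have hs2 : a ≠ partner t (sig t a) := by
        intro hc
        apply tau_ne_partner ht (sig t a)
        rw [← hc]
        exact tau_sig ht a ha
      rw [P_inr_q, if_neg (sig_ne_00 ht a ha), tau_sig ht a ha, P_inr_inr,
        if_neg hs1, if_neg hs2]
    · rintro (b | w) hx
      · cases b
        · rw [P_ff, P_q_inr] at hx
          split at hx <;> omega
        · rw [P_tf, P_h_inr] at hx; omega
      · rw [P_inr_q, P_inr_inr] at hx
        split at hx
        · rename_i hw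
          split at hx
          · omega
          · split at hx
            · rename_i hp
              exfalso
              rw [hw] at hp
              exact ha (by rw [hp]; rfl)
            · omega
        · rename_i hw
          split at hx
          · omega
          · split at hx
            · omega
            · have := (ecode_eq_iff ht).mp (by omega : ecode t w (tau t w) = ecode t w a)
              rcases this with ⟨-, h2⟩ | ⟨h1, h2⟩
              · have : w = sig t a := tau_inj ht hw (sig_ne_00 ht a ha)
                  (by rw [tau_sig ht a ha]; exact h2)
                rw [this]
              · exact absurd (h1 ▸ h2) (tau_ne_self ht w)

lemma case_inr_inr (a b : C t) (hab : a ≠ b) :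
    ∃! x, P t x (.inr a) = P t x (.inr b) := by
  refine ⟨.inl true, ?_, ?_⟩
  · show P t _ _ = P t _ _
    rw [P_h_inr, P_h_inr]
  · rintro (c | w) hx
    · cases c
      · exfalso
        rw [P_q_inr, P_q_inr] at hx
        split at hx <;> split at hx
        · rename_i h1 h2; exact hab (h1.trans h2.symm)
        · omega
        · omega
        · rename_i h1 h2
          have := (ecode_eq_iff ht).mp (by omega : ecode t a (tau t a) = ecode t b (tau t b))
          rcases this with ⟨h3, h4⟩ | ⟨h3, h4⟩
          · exact hab h3
          · exact tau_no2cycle ht h1 h2 hab h4 h3.symm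
      · rfl
    · exfalso
      rw [P_inr_inr, P_inr_inr] at hx
      by_cases h1 : w = a
      · rw [if_pos h1] at hx
        by_cases h2 : w = b
        · exact hab (h1.symm.trans h2)
        · rw [if_neg h2] at hx
          by_cases h3 : b = partner t w
          · rw [if_pos h3] at hx; omega
          · rw [if_neg h3] at hx; omega
      · rw [if_neg h1] at hx
        by_cases h2 : w = b
        · rw [if_pos h2] at hx
          by_cases h3 : a = partner t w
          · rw [if_pos h3] at hx; omega
          · rw [if_neg h3] at hx; omega
        · rw [if_neg h2] at hx
          by_cases h3 : a = partner t w <;> by_cases h4 : b = partner t w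
          · exact hab (h3.trans h4.symm)
          · rw [if_pos h3, if_neg h4] at hx; omega
          · rw [if_neg h3, if_pos h4] at hx; omega
          · rw [if_neg h3, if_neg h4] at hx
            have := (ecode_eq_iff ht).mp (by omega : ecode t w a = ecode t w b)
            rcases this with ⟨-, h5⟩ | ⟨h5, h6⟩
            · exact hab h5
            · exact h2 h5

theorem P_ump : ∀ Y Z : Bool ⊕ C t, Y ≠ Z → ∃! x, P t x Y = P t x Z := by
  have symmHelp : ∀ Y Z : Bool ⊕ C t, (∃! x, P t x Y = P t x Z) →
      (∃! x, P t x Z = P t x Y) := by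
    rintro Y Z ⟨x, hx, hu⟩
    exact ⟨x, hx.symm, fun w hw => hu w hw.symm⟩
  rintro (yb | ya) (zb | za) hne
  · cases yb <;> cases zb
    · exact absurd rfl hne
    · exact symmHelp _ _ case_hq
    · exact case_hq
    · exact absurd rfl hne
  · cases yb
    · exact case_q_inr ht za
    · exact case_h_inr za
  · cases zb
    · exact symmHelp _ _ (case_q_inr ht ya)
    · exact symmHelp _ _ (case_h_inr ya)
  · exact case_inr_inr ht ya za (fun h => hne (congrArg Sum.inr h))

omit ht in
theorem P_diag (x : Bool ⊕ C t) : P t x x = 0 := by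
  rcases x with b | a
  · cases b
    · exact P_ff
    · exact P_tt
  · rw [P_inr_inr, if_pos rfl]

omit ht in
theorem P_off (x y : Bool ⊕ C t) (h : x ≠ y) : P t x y ≠ 0 := by
  rcases x with b | a <;> rcases y with c | d
  · cases b <;> cases c
    · exact (h rfl).elim
    · rw [P_ft]; omega
    · rw [P_tf]; omega
    · exact (h rfl).elim
  · cases b
    · rw [P_q_inr]; split <;> omega
    · rw [P_h_inr]; omega
  · cases c
    · rw [P_inr_q]; split <;> omega
    · rw [P_inr_h]; omega
  · rw [P_inr_inr, if_neg (fun hc => h (congrArg Sum.inr hc))]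
    split <;> omega

omit ht in
theorem P_symm (x y : Bool ⊕ C t) : P t x y = P t y x := by
  rcases x with b | a <;> rcases y with c | d
  · cases b <;> cases c <;> rfl
  · cases b
    · rw [P_q_inr, P_inr_q]
    · rw [P_h_inr, P_inr_h]
  · cases c
    · rw [P_q_inr, P_inr_q]
    · rw [P_h_inr, P_inr_h]
  · rw [P_inr_inr, P_inr_inr]
    by_cases h : a = d
    · rw [if_pos h, if_pos h.symm]
    · rw [if_neg h, if_neg (show ¬d = a from fun hc => h hc.symm)]
      by_cases h2 : d = partner t a
      · rw [if_pos h2, if_pos (show a = partner t d from partner_eq_iff.mp h2)]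
      · rw [if_neg h2,
          if_neg (show ¬a = partner t d from fun hc => h2 (partner_eq_iff.mp hc))]
        rw [ecode, ecode, min_comm, max_comm]

end Main
end Hub2

open Cardinal

set_option maxRecDepth 100000 in
lemma no4 : ∀ a b c d e f : Fin 6,
    ¬(Xor' (b = d) (c = e) ∧ Xor' (a = d) (c = f) ∧
      Xor' (a = e) (b = f) ∧ Xor' (a = b) (e = f) ∧
      Xor' (a = c) (d = f) ∧ Xor' (b = c) (d = e)) := by unfold Xor' Xor; decide

section Forward
variable {D : Type u}

theorem forward (m : MetricSpace D)
    (hump : ∀ y z : D, y ≠ z → ∃! x, m.dist x y = m.dist x z) :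
    Cardinal.mk D ≠ 2 ∧ Cardinal.mk D ≠ 4 ∧ Cardinal.mk D ≤ continuum := by
  classical
  letI := m
  have hdist : ∀ y z : D, y ≠ z → m.dist y z ≠ 0 := by
    intro y z h h0
    exact h (eq_of_dist_eq_zero h0)
  -- helper: exactly one of two candidates bisects
  have hxor : ∀ a b c d : D, a ≠ b → c ≠ d → c ≠ a → c ≠ b → d ≠ a → d ≠ b →
      (∀ x : D, x = a ∨ x = b ∨ x = c ∨ x = d) →
      Xor' (dist c a = dist c b) (dist d a = dist d b) := by
    intro a b c d hab hcd hca hcb hda hdb hall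
    obtain ⟨x, hx, hu⟩ := hump a b hab
    have hxa : x ≠ a := by
      rintro rfl
      rw [dist_self] at hx
      exact hdist x b (by rintro rfl; exact hab rfl) hx.symm
    have hxb : x ≠ b := by
      rintro rfl
      rw [dist_self] at hx
      exact hdist x a (fun h => hab h.symm) hx
    rcases hall x with rfl | rfl | rfl | rfl
    · exact absurd rfl hxa
    · exact absurd rfl hxb
    · exact Or.inl ⟨hx, fun h => hcd (hu d h ▸ rfl)⟩
    · exact Or.inr ⟨hx, fun h => hcd ((hu c h).symm ▸ rfl)⟩
  refine ⟨?_, ?_, ?_⟩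
  · -- not 2
    intro h2
    rw [Cardinal.mk_eq_two_iff] at h2
    obtain ⟨a, b, hab, huniv⟩ := h2
    obtain ⟨x, hx, -⟩ := hump a b hab
    have hxmem : x ∈ ({a, b} : Set D) := huniv ▸ Set.mem_univ x
    rcases hxmem with rfl | rfl
    · rw [dist_self] at hx
      exact hdist x b (by rintro rfl; exact hab rfl) hx.symm
    · rw [dist_self] at hx
      exact hdist x a (fun h => hab h.symm) hx
  · -- not 4
    intro h4
    have : #D = #(ULift.{u} (Fin 4)) := by
      simp [h4]
    obtain ⟨e⟩ := Cardinal.eq.mp this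
    set p : Fin 4 → D := fun i => e.symm (ULift.up i) with hp
    have hpinj : Function.Injective p := fun i j h => by
      have := e.symm.injective h
      simpa using this
    have hne : ∀ i j : Fin 4, i ≠ j → p i ≠ p j := fun i j hij h => hij (hpinj h)
    have hall4 : ∀ x : D, x = p 0 ∨ x = p 1 ∨ x = p 2 ∨ x = p 3 := by
      intro x
      have hx : x = p ((e x).down) := by
        rw [hp]
        show x = e.symm ⟨(e x).down⟩
        rw [show (⟨(e x).down⟩ : ULift (Fin 4)) = e x from rfl]
        simp
      have : (e x).down = 0 ∨ (e x).down = 1 ∨ (e x).down = 2 ∨ (e x).down = 3 := by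
        generalize (e x).down = i
        revert i; decide
      rcases this with h | h | h | h <;> rw [h] at hx <;> tauto
    set v : Fin 6 → ℝ := ![dist (p 0) (p 1), dist (p 0) (p 2), dist (p 0) (p 3),
      dist (p 1) (p 2), dist (p 1) (p 3), dist (p 2) (p 3)] with hv
    set f : Fin 6 → Fin 6 := fun i => (Finset.univ.filter (fun j => v j = v i)).min'
      ⟨i, by simp⟩ with hf
    have hfmem : ∀ i, f i ∈ Finset.univ.filter (fun j => v j = v i) := fun i =>
      Finset.min'_mem _ _
    have hfv : ∀ i, v (f i) = v i := by
      intro i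
      have := hfmem i
      simp at this
      exact this
    have hfiff : ∀ i j, f i = f j ↔ v i = v j := by
      intro i j
      constructor
      · intro h
        rw [← hfv i, h, hfv j]
      · intro h
        have : (fun j' => v j' = v i) = (fun j' => v j' = v j) := by
          funext k; simp [h]
        simp only [hf, this]
    -- six xors on v
    have X1 : Xor' (v 1 = v 3) (v 2 = v 4) := by
      have := hxor (p 0) (p 1) (p 2) (p 3) (hne 0 1 (by decide)) (hne 2 3 (by decide))
        (hne 2 0 (by decide)) (hne 2 1 (by decide)) (hne 3 0 (by decide)) (hne 3 1 (by decide))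
        (fun x => by rcases hall4 x with h|h|h|h <;> tauto)
      simpa [hv, dist_comm] using this
    have X2 : Xor' (v 0 = v 3) (v 2 = v 5) := by
      have := hxor (p 0) (p 2) (p 1) (p 3) (hne 0 2 (by decide)) (hne 1 3 (by decide))
        (hne 1 0 (by decide)) (hne 1 2 (by decide)) (hne 3 0 (by decide)) (hne 3 2 (by decide))
        (fun x => by rcases hall4 x with h|h|h|h <;> tauto)
      simpa [hv, dist_comm] using this
    have X3 : Xor' (v 0 = v 4) (v 1 = v 5) := by
      have := hxor (p 0) (p 3) (p 1) (p 2) (hne 0 3 (by decide)) (hne 1 2 (by decide))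
        (hne 1 0 (by decide)) (hne 1 3 (by decide)) (hne 2 0 (by decide)) (hne 2 3 (by decide))
        (fun x => by rcases hall4 x with h|h|h|h <;> tauto)
      simpa [hv, dist_comm] using this
    have X4 : Xor' (v 0 = v 1) (v 4 = v 5) := by
      have := hxor (p 1) (p 2) (p 0) (p 3) (hne 1 2 (by decide)) (hne 0 3 (by decide))
        (hne 0 1 (by decide)) (hne 0 2 (by decide)) (hne 3 1 (by decide)) (hne 3 2 (by decide))
        (fun x => by rcases hall4 x with h|h|h|h <;> tauto)
      simpa [hv, dist_comm] using this
    have X5 : Xor' (v 0 = v 2) (v 3 = v 5) := by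
      have := hxor (p 1) (p 3) (p 0) (p 2) (hne 1 3 (by decide)) (hne 0 2 (by decide))
        (hne 0 1 (by decide)) (hne 0 3 (by decide)) (hne 2 1 (by decide)) (hne 2 3 (by decide))
        (fun x => by rcases hall4 x with h|h|h|h <;> tauto)
      simpa [hv, dist_comm] using this
    have X6 : Xor' (v 1 = v 2) (v 3 = v 4) := by
      have := hxor (p 2) (p 3) (p 0) (p 1) (hne 2 3 (by decide)) (hne 0 1 (by decide))
        (hne 0 2 (by decide)) (hne 0 3 (by decide)) (hne 1 2 (by decide)) (hne 1 3 (by decide))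
        (fun x => by rcases hall4 x with h|h|h|h <;> tauto)
      simpa [hv, dist_comm] using this
    have transfer : ∀ (i j k l : Fin 6), Xor' (v i = v j) (v k = v l) →
        Xor' (f i = f j) (f k = f l) := by
      intro i j k l h
      rcases h with ⟨h1, h2⟩ | ⟨h1, h2⟩
      · exact Or.inl ⟨(hfiff _ _).mpr h1, fun hc => h2 ((hfiff _ _).mp hc)⟩
      · exact Or.inr ⟨(hfiff _ _).mpr h1, fun hc => h2 ((hfiff _ _).mp hc)⟩
    exact no4 (f 0) (f 1) (f 2) (f 3) (f 4) (f 5)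
      ⟨transfer _ _ _ _ X1, transfer _ _ _ _ X2, transfer _ _ _ _ X3,
       transfer _ _ _ _ X4, transfer _ _ _ _ X5, transfer _ _ _ _ X6⟩
  · -- ≤ continuum
    by_cases hst : Nontrivial D
    · obtain ⟨a, b, hab⟩ := hst
      have hinj : Function.Injective (fun x : D => ((dist x a, dist x b) : ℝ × ℝ)) := by
        intro x x' h
        by_contra hne
        simp only [Prod.mk.injEq] at h
        obtain ⟨w, hw, hu⟩ := hump x x' hne
        have ha : dist a x = dist a x' := by rw [dist_comm, h.1, dist_comm]
        have hb : dist b x = dist b x' := by rw [dist_comm, h.2, dist_comm]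
        exact hab ((hu a ha).trans (hu b hb).symm)
      have hinj' : Function.Injective (fun x : D => ULift.up.{u} ((dist x a, dist x b) : ℝ × ℝ)) := by
        intro x x' h
        exact hinj (congrArg ULift.down h)
      calc #D ≤ #(ULift.{u} (ℝ × ℝ)) := Cardinal.mk_le_of_injective hinj'
        _ ≤ continuum := by
            simp [Cardinal.mk_uLift, Cardinal.mk_prod, Cardinal.mk_real,
              Cardinal.lift_continuum, Cardinal.continuum_mul_self]
    · have : Subsingleton D := not_nontrivial_iff_subsingleton.mp hst
      calc #D ≤ 1 := Cardinal.le_one_iff_subsingleton.mpr this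
        _ ≤ continuum := le_trans (by norm_num) Cardinal.aleph0_le_continuum

end Forward


/-- Ohta–Ono / Ito–Ohta–Ono: a discrete space `D` admits a compatible metric with the
unique midset property iff `|D| ≠ 2`, `|D| ≠ 4` and `|D| ≤ 𝔠`. -/
theorem discrete_ump_iff_card (D : Type*) [t : TopologicalSpace D] [DiscreteTopology D] :
    (∃ m : MetricSpace D, m.toUniformSpace.toTopologicalSpace = t ∧
        ∀ y z : D, y ≠ z → ∃! x, m.dist x y = m.dist x z) ↔
    (Cardinal.mk D ≠ 2 ∧ Cardinal.mk D ≠ 4 ∧ Cardinal.mk D ≤ Cardinal.continuum) := by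
  classical
  constructor
  · rintro ⟨m, -, hump⟩
    exact forward m hump
  · rintro ⟨h2, h4, hc⟩
    by_cases hfin : Finite D
    · haveI := Fintype.ofFinite D
      have hmk : #D = (Fintype.card D : Cardinal) := Cardinal.mk_fintype D
      by_cases hsub : Fintype.card D ≤ 1
      · -- subsingleton
        haveI : Subsingleton D := Fintype.card_le_one_iff_subsingleton.mp hsub
        apply buildMetric (fun _ _ => (0:ℝ))
        · intro x; rfl
        · intro x y; rfl
        · intro x y h; exact absurd (Subsingleton.elim x y) h
        · intro x y; norm_num
        · intro y z h; exact absurd (Subsingleton.elim y z) h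
      · have hn2 : Fintype.card D ≠ 2 := by
          intro h
          apply h2; rw [hmk, h]; norm_num
        have hn4 : Fintype.card D ≠ 4 := by
          intro h
          apply h4; rw [hmk, h]; norm_num
        rcases Nat.even_or_odd (Fintype.card D) with he | ho
        · -- even, card ≥ 3, ≠ 4 : card = 6 or card ≥ 8
          by_cases hn6 : Fintype.card D = 6
          · have e : D ≃ Fin 6 := Fintype.equivFinOfCardEq hn6
            exact natTableCase e M6 M6_diag M6_off M6_symm M6_ump
          · obtain ⟨k, hk⟩ := he
            have hk4 : 4 ≤ k := by omega
            set t' := k - 1 with ht'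
            have h3t : 3 ≤ t' := by omega
            haveI : NeZero t' := ⟨by omega⟩
            have hcard : Fintype.card (Bool ⊕ Hub.C t') = Fintype.card D := by
              simp only [Fintype.card_sum, Fintype.card_bool, Fintype.card_prod, ZMod.card]
              omega
            have e : D ≃ (Bool ⊕ Hub.C t') := Fintype.equivOfCardEq hcard.symm
            exact natTableCase e (Hub.P t') Hub2.P_diag Hub2.P_off Hub2.P_symm (Hub2.P_ump h3t)
        · -- odd
          obtain ⟨k, hk⟩ := ho
          haveI : NeZero (Fintype.card D) := ⟨by omega⟩
          have e : D ≃ ULift.{u_1, 0} (ZMod (Fintype.card D)) :=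
            Fintype.equivOfCardEq (by simp [ZMod.card])
          exact groupCase _ e (uliftHalf (zmodHalf _ k hk)) hc
    · -- infinite
      haveI : Infinite D := not_finite_iff_infinite.mp hfin
      have hmkf : #(D →₀ ZMod 3) = #D := by
        rw [Cardinal.mk_finsupp_lift_of_infinite D (ZMod 3)]
        have h1 : Cardinal.lift.{0} #D = #D := Cardinal.lift_uzero _
        have h2 : Cardinal.lift.{u_1} #(ZMod 3) ≤ #D := by
          have : #(ZMod 3) = 3 := by
            rw [Cardinal.mk_fintype]
            simp [ZMod.card]
          rw [this]
          have h3 : ((3:ℕ) : Cardinal.{u_1}) ≤ #D :=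
            le_trans (Cardinal.nat_lt_aleph0 3).le (Cardinal.aleph0_le_mk D)
          simpa using h3
        rw [h1]
        exact max_eq_left h2
      obtain ⟨e⟩ := Cardinal.eq.mp hmkf.symm
      exact groupCase _ e (finsuppHalf D) hc
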